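/- The function g(x) = (x+1)·ln(x+1) - x·ln x satisfies the asymptotic expansion g(ν - 1/2) = ln ν + 1 + O(1/ν²) as ν → ∞; precisely, ν²·|g(ν - 1/2) - ln ν - 1| is bounded for ν sufficiently large. -/

import Mathlib

open Real

lemma log_taylor_bound_neg {t : ℝ} (h0 : 0 < t) (h2 : t ≤ 1/2) :
    |Real.log (1 - t) - (-t - t^2/2)| ≤ 2*t^3 := by
  have habs : |t| < 1 := by rw [abs_of_pos h0]; linarith
  have hsum : (∑ i ∈ Finset.range 2, t ^ (i + 1) / (i + 1)) = t + t^2/2 := by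
    norm_num [Finset.sum_range_succ]
  have h := Real.abs_log_sub_add_sum_range_le habs 2
  rw [hsum, abs_of_pos h0] at h
  have heq : t + t ^ 2 / 2 + Real.log (1 - t) = Real.log (1 - t) - (-t - t^2/2) := by ring
  rw [heq] at h
  calc |Real.log (1 - t) - (-t - t^2/2)| ≤ t^3 / (1 - t) := h
    _ ≤ 2*t^3 := by rw [div_le_iff₀ (by linarith)]; nlinarith [pow_pos h0 3]

lemma log_taylor_bound_pos {t : ℝ} (h0 : 0 < t) (h2 : t ≤ 1/2) :
    |Real.log (1 + t) - (t - t^2/2)| ≤ 2*t^3 := by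
  have habs : |(-t)| < 1 := by rw [abs_neg, abs_of_pos h0]; linarith
  have hsum : (∑ i ∈ Finset.range 2, (-t) ^ (i + 1) / (i + 1)) = -t + t^2/2 := by
    norm_num [Finset.sum_range_succ]
  have h := Real.abs_log_sub_add_sum_range_le habs 2
  rw [hsum, abs_neg, abs_of_pos h0, show (1:ℝ) - -t = 1 + t by ring] at h
  have heq : -t + t ^ 2 / 2 + Real.log (1 + t) = Real.log (1 + t) - (t - t^2/2) := by ring
  rw [heq] at h
  calc |Real.log (1 + t) - (t - t^2/2)| ≤ t^3 / (1 - t) := h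
    _ ≤ 2*t^3 := by rw [div_le_iff₀ (by linarith)]; nlinarith [pow_pos h0 3]

theorem g_asymptotic (g : ℝ → ℝ)
    (hg : ∀ x > (0:ℝ), g x = (x + 1) * Real.log (x + 1) - x * Real.log x) :
    ∃ C ν₀ : ℝ, ∀ ν ≥ ν₀, ν ^ 2 * |g (ν - 1/2) - Real.log ν - 1| ≤ C := by
  refine ⟨1, 1, fun ν hν => ?_⟩
  have hν0 : (0:ℝ) < ν := by linarith
  set t : ℝ := 1/(2*ν) with ht
  have ht0 : 0 < t := by positivity
  have ht2 : t ≤ 1/2 := by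
    rw [ht, div_le_div_iff₀ (by linarith) (by norm_num)]; linarith
  have htν : ν * t = 1/2 := by rw [ht]; field_simp
  have hx : ν - 1/2 > 0 := by linarith
  have h1p : (0:ℝ) < 1 + t := by linarith
  have h1m : (0:ℝ) < 1 - t := by linarith
  have e1 : ν + 1/2 = ν * (1 + t) := by rw [mul_add, mul_one, htν]
  have e2 : ν - 1/2 = ν * (1 - t) := by rw [mul_sub, mul_one, htν]
  have l1 : Real.log (ν + 1/2) = Real.log ν + Real.log (1 + t) := by
    rw [e1, Real.log_mul hν0.ne' h1p.ne']
  have l2 : Real.log (ν - 1/2) = Real.log ν + Real.log (1 - t) := by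
    rw [e2, Real.log_mul hν0.ne' h1m.ne']
  have hgx := hg (ν - 1/2) hx
  rw [show ν - 1/2 + 1 = ν + 1/2 by ring] at hgx
  set A := Real.log (1 + t) - (t - t^2/2) with hA
  set B := Real.log (1 - t) - (-t - t^2/2) with hB
  have hAb : |A| ≤ 2*t^3 := log_taylor_bound_pos ht0 ht2
  have hBb : |B| ≤ 2*t^3 := log_taylor_bound_neg ht0 ht2
  have key : g (ν - 1/2) - Real.log ν - 1 = -t^2/2 + (ν + 1/2)*A - (ν - 1/2)*B := by
    rw [hgx, l1, l2, hA, hB]; linear_combination 2*htν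
  rw [key]
  have habs : |-t^2/2 + (ν + 1/2)*A - (ν - 1/2)*B|
      ≤ t^2/2 + (ν + 1/2)*(2*t^3) + (ν - 1/2)*(2*t^3) := by
    have h1 : |(-t^2/2 + (ν + 1/2)*A) - (ν - 1/2)*B|
        ≤ |-t^2/2 + (ν + 1/2)*A| + |(ν - 1/2)*B| := abs_sub _ _
    have h2 : |-t^2/2 + (ν + 1/2)*A| ≤ |-t^2/2| + |(ν + 1/2)*A| := abs_add_le _ _
    have h3 : |(-t^2/2 : ℝ)| = t^2/2 := by
      rw [show (-t^2/2 : ℝ) = -(t^2/2) by ring, abs_neg, abs_of_nonneg (by positivity)]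
    have h4 : |(ν + 1/2)*A| ≤ (ν + 1/2)*(2*t^3) := by
      rw [abs_mul, abs_of_pos (by linarith : (0:ℝ) < ν + 1/2)]
      exact mul_le_mul_of_nonneg_left hAb (by linarith)
    have h5 : |(ν - 1/2)*B| ≤ (ν - 1/2)*(2*t^3) := by
      rw [abs_mul, abs_of_pos hx]
      exact mul_le_mul_of_nonneg_left hBb (by linarith)
    calc |-t^2/2 + (ν + 1/2)*A - (ν - 1/2)*B|
        ≤ |-t^2/2 + (ν + 1/2)*A| + |(ν - 1/2)*B| := h1
      _ ≤ |-t^2/2| + |(ν + 1/2)*A| + |(ν - 1/2)*B| := by linarith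
      _ ≤ t^2/2 + (ν + 1/2)*(2*t^3) + (ν - 1/2)*(2*t^3) := by rw [h3]; linarith
  have hsq1 : ν^2 * t^2 = 1/4 := by
    calc ν^2 * t^2 = (ν*t)^2 := by ring
      _ = 1/4 := by rw [htν]; norm_num
  have hsq2 : ν^3 * t^3 = 1/8 := by
    calc ν^3 * t^3 = (ν*t)^3 := by ring
      _ = 1/8 := by rw [htν]; norm_num
  have hfin : ν^2 * (t^2/2 + (ν + 1/2)*(2*t^3) + (ν - 1/2)*(2*t^3)) = 5/8 := by
    linear_combination (1/2)*hsq1 + 4*hsq2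
  calc ν^2 * |-t^2/2 + (ν + 1/2)*A - (ν - 1/2)*B|
      ≤ ν^2 * (t^2/2 + (ν + 1/2)*(2*t^3) + (ν - 1/2)*(2*t^3)) :=
        mul_le_mul_of_nonneg_left habs (by positivity)
    _ = 5/8 := hfin
    _ ≤ 1 := by norm_num
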